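/- Let Γ be a finitely generated subgroup of GL_n over a field, and let C be a conjugacy class of GL_n consisting of elements whose semisimple part is not the identity (nonunipotent elements), such that the Zariski closure of C does not contain the identity. Then there exists a finite-index subgroup H ≤ Γ with H ∩ C = ∅. -/

import Mathlib

open Matrix

set_option maxHeartbeats 1000000
set_option synthInstance.maxHeartbeats 400000

private lemma auxStmt18_jacobson : IsJacobsonRing ℤ := by
  rw [isJacobsonRing_iff_prime_eq]
  intro P hP
  rcases eq_or_ne P ⊥ with rfl | hne
  · refine le_antisymm (fun x hx => ?_) Ideal.le_jacobson
    have hu : IsUnit (x * x + 1) := Ideal.mem_jacobson_bot.mp hx x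
    rcases Int.isUnit_iff.mp hu with h | h
    · have : x = 0 := by nlinarith
      simp [this]
    · exfalso; nlinarith [mul_self_nonneg x]
  · haveI := IsPrime.to_maximal_ideal hne
    exact Ideal.jacobson_eq_self_of_isMaximal

private lemma auxStmt18_finite (F : Type*) [Field F] (h : Algebra.FiniteType ℤ F) :
    Finite F := by
  haveI := h
  haveI := auxStmt18_jacobson
  have hfin : Module.Finite ℤ F := finite_of_finite_type_of_isJacobsonRing ℤ F
  haveI : Algebra.IsIntegral ℤ F := Algebra.IsIntegral.of_finite ℤ F
  have hker : RingHom.ker (algebraMap ℤ F) ≠ ⊥ := by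
    intro hbot
    have hinj : Function.Injective (algebraMap ℤ F) := by
      rwa [RingHom.injective_iff_ker_eq_bot]
    exact Int.not_isField (isField_of_isIntegral_of_isField hinj (Field.toIsField F))
  obtain ⟨c, hcmem, hc0⟩ := Submodule.exists_mem_ne_zero_of_ne_bot hker
  have hcF : (c : F) = 0 := by
    have := RingHom.mem_ker.mp hcmem
    simpa using this
  have htor : AddMonoid.IsTorsion F := by
    intro x
    rw [isOfFinAddOrder_iff_nsmul_eq_zero]
    refine ⟨c.natAbs, Int.natAbs_pos.mpr hc0, ?_⟩
    have h2 : ((c.natAbs : ℤ) : F) = 0 := by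
      rcases Int.natAbs_eq c with h | h
      · rw [← h, hcF]
      · rw [show ((c.natAbs : ℤ)) = -c by omega]; simp [hcF]
    rw [Int.cast_natCast] at h2
    rw [nsmul_eq_mul, h2, zero_mul]
  haveI : AddGroup.FG F := Module.Finite.iff_addGroup_fg.mp hfin
  exact AddCommGroup.finite_of_fg_torsion F htor

private lemma auxStmt18_eval_map {σ R B : Type*} [CommSemiring R] [CommSemiring B] (g : R →+* B)
    (v : σ → R) (q : MvPolynomial σ R) :
    g (MvPolynomial.eval v q) = MvPolynomial.eval (fun i => g (v i)) (MvPolynomial.map g q) := by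
  rw [MvPolynomial.eval_map, ← MvPolynomial.eval₂_id (g := v) q, MvPolynomial.eval₂_comp_left g]
  rfl

/-- If `Γ` is a finitely generated subgroup of `GL_n(k)` and `C` is a conjugacy class
of `GL_n(k)` whose Zariski closure does not contain the identity (witnessed by a
polynomial in the matrix entries vanishing on `C` but not at `1`), then some
finite-index subgroup of `Γ` is disjoint from `C`. -/
theorem stmt18 {n : ℕ} {k : Type*} [Field k]
    (Γ : Subgroup (GL (Fin n) k)) (hΓ : Γ.FG)
    (c : GL (Fin n) k) (C : Set (GL (Fin n) k)) (hC : C = {x | IsConj c x})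
    (hcl : ∃ p : MvPolynomial (Fin n × Fin n) k,
      (∀ g ∈ C, MvPolynomial.eval
          (fun ij => (g : Matrix (Fin n) (Fin n) k) ij.1 ij.2) p = 0) ∧
      MvPolynomial.eval
          (fun ij => (1 : Matrix (Fin n) (Fin n) k) ij.1 ij.2) p ≠ 0) :
    ∃ H : Subgroup (GL (Fin n) k), H ≤ Γ ∧ H.relIndex Γ ≠ 0 ∧
      (H : Set (GL (Fin n) k)) ∩ C = ∅ := by
  classical
  obtain ⟨p, hp0, hp1⟩ := hcl
  obtain ⟨S, hS⟩ := hΓ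
  -- the finitely generated base ring
  set E : Finset k :=
    (S.biUnion fun g =>
      (Finset.image (fun ij : Fin n × Fin n =>
        ((g : GL (Fin n) k) : Matrix (Fin n) (Fin n) k) ij.1 ij.2) Finset.univ) ∪
      (Finset.image (fun ij : Fin n × Fin n =>
        ((g⁻¹ : GL (Fin n) k) : Matrix (Fin n) (Fin n) k) ij.1 ij.2) Finset.univ))
    ∪ p.support.image (fun m => MvPolynomial.coeff m p) with hE
  set A : Subalgebra ℤ k := Algebra.adjoin ℤ (E : Set k) with hA
  haveI hftA : Algebra.FiniteType ℤ A :=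
    (Subalgebra.fg_iff_finiteType A).mp (by rw [hA]; exact Subalgebra.fg_adjoin_finset E)
  have hcoeff : ∀ m ∈ p.support, MvPolynomial.coeff m p ∈ A := fun m hm =>
    Algebra.subset_adjoin (by
      simp only [E, Finset.coe_union, Set.mem_union]
      right
      exact Finset.mem_coe.mpr (Finset.mem_image_of_mem _ hm))
  -- lift p to a polynomial q over A
  set q : MvPolynomial (Fin n × Fin n) A :=
    ∑ m ∈ p.support.attach,
      MvPolynomial.monomial m.1 (⟨MvPolynomial.coeff m.1 p, hcoeff m.1 m.2⟩ : A) with hq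
  have hmapq : MvPolynomial.map (algebraMap A k) q = p := by
    rw [hq, map_sum]
    have : ∀ m ∈ p.support.attach,
        MvPolynomial.map (algebraMap A k)
          (MvPolynomial.monomial m.1 (⟨MvPolynomial.coeff m.1 p, hcoeff m.1 m.2⟩ : A))
          = MvPolynomial.monomial m.1 (MvPolynomial.coeff m.1 p) := by
      intro m _
      rw [MvPolynomial.map_monomial]
      norm_num [Subalgebra.algebraMap_eq]
    rw [Finset.sum_congr rfl this, Finset.sum_attach p.support
      (fun m => MvPolynomial.monomial m (MvPolynomial.coeff m p)),
      MvPolynomial.support_sum_monomial_coeff]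
  -- entries of the identity lie in A
  have hone_mem : ∀ i j : Fin n, (1 : Matrix (Fin n) (Fin n) k) i j ∈ A := by
    intro i j
    by_cases h : i = j <;> simp [Matrix.one_apply, h, zero_mem, one_mem]
  set v1 : Fin n × Fin n → A := fun ij =>
    ⟨(1 : Matrix (Fin n) (Fin n) k) ij.1 ij.2, hone_mem ij.1 ij.2⟩ with hv1
  set t : A := MvPolynomial.eval v1 q with ht
  have htval : (algebraMap A k) t = MvPolynomial.eval
      (fun ij => (1 : Matrix (Fin n) (Fin n) k) ij.1 ij.2) p := by
    rw [ht, auxStmt18_eval_map, hmapq]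
    congr 1
  have ht0 : t ≠ 0 := by
    intro h
    apply hp1
    rw [← htval, h, map_zero]
  -- the finite field
  set L := Localization.Away t with hL
  have hinjL : Function.Injective (algebraMap A L) :=
    IsLocalization.injective L (powers_le_nonZeroDivisors_of_noZeroDivisors ht0)
  haveI : Nontrivial L :=
    ⟨algebraMap A L 0, algebraMap A L 1, fun h => zero_ne_one (hinjL h)⟩
  obtain ⟨mI, hmI⟩ := Ideal.exists_maximal L
  haveI := hmI
  set F := L ⧸ mI with hF
  letI : Field F := Ideal.Quotient.field mI
  haveI : Monoid.FG (Submonoid.powers t) :=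
    (Monoid.fg_iff_submonoid_fg _).mpr (Submonoid.powers_fg t)
  haveI hftL : Algebra.FiniteType A L :=
    IsLocalization.finiteType_of_monoid_fg (Submonoid.powers t) L
  haveI hftF : Algebra.FiniteType L F :=
    Algebra.FiniteType.of_surjective
      (Algebra.ofId L F) (fun x => by
        obtain ⟨y, hy⟩ := Ideal.Quotient.mk_surjective (I := mI) x
        exact ⟨y, hy⟩)
  haveI : Algebra.FiniteType ℤ L := Algebra.FiniteType.trans hftA hftL
  have hZF : Algebra.FiniteType ℤ F := Algebra.FiniteType.trans this hftF
  rw [Subsingleton.elim (Ideal.instAlgebraQuotient ℤ mI : Algebra ℤ F) (Ring.toIntAlgebra F)] at hZF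
  haveI hFfin : Finite F := auxStmt18_finite F hZF
  set φ : A →+* F := (Ideal.Quotient.mk mI).comp (algebraMap A L) with hφ
  have hφt : φ t ≠ 0 := by
    have hu : IsUnit (algebraMap A L t) := IsLocalization.Away.algebraMap_isUnit t
    have : IsUnit (φ t) := by
      rw [hφ, RingHom.comp_apply]
      exact hu.map _
    exact this.ne_zero
  -- reduction map on entries
  set e : k → F := fun x => if h : x ∈ A then φ ⟨x, h⟩ else 0 with he
  have he_mem : ∀ {x : k} (h : x ∈ A), e x = φ ⟨x, h⟩ := fun {x} h => dif_pos h
  have he_mul : ∀ {x y : k}, x ∈ A → y ∈ A → e (x * y) = e x * e y := by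
    intro x y hx hy
    rw [he_mem hx, he_mem hy, he_mem (mul_mem hx hy), ← _root_.map_mul]
    rfl
  have he_zero : e 0 = 0 := by rw [he_mem (zero_mem A)]; exact map_zero φ
  have he_one : e 1 = 1 := by rw [he_mem (one_mem A)]; exact map_one φ
  have he_sum : ∀ {ι : Type} (s : Finset ι) (f : ι → k), (∀ i ∈ s, f i ∈ A) →
      e (∑ i ∈ s, f i) = ∑ i ∈ s, e (f i) := by
    intro ι s f
    induction s using Finset.induction_on with
    | empty => intro _; simpa using he_zero
    | @insert a s' hx ih =>
      intro hmem
      rw [Finset.sum_insert hx, Finset.sum_insert hx]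
      have h1 : f a ∈ A := hmem a (Finset.mem_insert_self a s')
      have h2 : ∑ i ∈ s', f i ∈ A := sum_mem (fun i hi =>
        hmem i (Finset.mem_insert_of_mem hi))
      rw [he_mem (add_mem h1 h2),
        show (⟨f a + ∑ i ∈ s', f i, add_mem h1 h2⟩ : A)
          = ⟨f a, h1⟩ + ⟨∑ i ∈ s', f i, h2⟩ from rfl, _root_.map_add,
        ← he_mem h1, ← he_mem h2]
      congr 1
      exact ih (fun i hi => hmem i (Finset.mem_insert_of_mem hi))
  have hmat_one : (1 : Matrix (Fin n) (Fin n) k).map e = 1 := by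
    ext i j
    by_cases h : i = j <;> simp [Matrix.map_apply, Matrix.one_apply, h, he_zero, he_one]
  have hmat_mul : ∀ M N : Matrix (Fin n) (Fin n) k, (∀ i j, M i j ∈ A) →
      (∀ i j, N i j ∈ A) → (M * N).map e = M.map e * N.map e := by
    intro M N hM hN
    ext i j
    rw [Matrix.map_apply, Matrix.mul_apply, Matrix.mul_apply,
      he_sum _ _ (fun l _ => mul_mem (hM i l) (hN l j))]
    exact Finset.sum_congr rfl (fun l _ => by
      rw [Matrix.map_apply, Matrix.map_apply, he_mul (hM i l) (hN l j)])
  -- the subgroup of matrices with entries in A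
  set Δ : Subgroup (GL (Fin n) k) :=
    { carrier := {γ | (∀ i j, (γ : Matrix (Fin n) (Fin n) k) i j ∈ A) ∧
        (∀ i j, ((γ⁻¹ : GL (Fin n) k) : Matrix (Fin n) (Fin n) k) i j ∈ A)}
      one_mem' := by
        constructor <;> intro i j <;>
          simpa using hone_mem i j
      mul_mem' := by
        rintro γ δ ⟨hγ1, hγ2⟩ ⟨hδ1, hδ2⟩
        constructor
        · intro i j
          rw [Units.val_mul, Matrix.mul_apply]
          exact sum_mem fun l _ => mul_mem (hγ1 i l) (hδ1 l j)
        · intro i j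
          rw [_root_.mul_inv_rev, Units.val_mul, Matrix.mul_apply]
          exact sum_mem fun l _ => mul_mem (hδ2 i l) (hγ2 l j)
      inv_mem' := by
        rintro γ ⟨hγ1, hγ2⟩
        refine ⟨hγ2, ?_⟩
        rw [inv_inv]
        exact hγ1 } with hΔ
  have hΓΔ : Γ ≤ Δ := by
    rw [← hS]
    apply (Subgroup.closure_le Δ).mpr
    intro g hg
    constructor
    · intro i j
      apply Algebra.subset_adjoin
      simp only [E, Finset.coe_union, Set.mem_union]
      left
      refine Finset.mem_coe.mpr (Finset.mem_biUnion.mpr ⟨g, hg, ?_⟩)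
      exact Finset.mem_union_left _ (Finset.mem_image.mpr ⟨(i, j), Finset.mem_univ _, rfl⟩)
    · intro i j
      apply Algebra.subset_adjoin
      simp only [E, Finset.coe_union, Set.mem_union]
      left
      refine Finset.mem_coe.mpr (Finset.mem_biUnion.mpr ⟨g, hg, ?_⟩)
      exact Finset.mem_union_right _ (Finset.mem_image.mpr ⟨(i, j), Finset.mem_univ _, rfl⟩)
  -- the reduction homomorphism
  have hval_inv : ∀ γ : Γ, ((γ : GL (Fin n) k) : Matrix (Fin n) (Fin n) k).map e *
      (((γ : GL (Fin n) k)⁻¹ : GL (Fin n) k) : Matrix (Fin n) (Fin n) k).map e = 1 := by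
    intro γ
    obtain ⟨h1, h2⟩ := hΓΔ γ.2
    rw [← hmat_mul _ _ h1 h2, ← Units.val_mul, mul_inv_cancel, Units.val_one, hmat_one]
  have hinv_val : ∀ γ : Γ, (((γ : GL (Fin n) k)⁻¹ : GL (Fin n) k) : Matrix (Fin n) (Fin n) k).map e *
      ((γ : GL (Fin n) k) : Matrix (Fin n) (Fin n) k).map e = 1 := by
    intro γ
    obtain ⟨h1, h2⟩ := hΓΔ γ.2
    rw [← hmat_mul _ _ h2 h1, ← Units.val_mul, inv_mul_cancel, Units.val_one, hmat_one]
  set f : Γ →* GL (Fin n) F :=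
    { toFun := fun γ => ⟨((γ : GL (Fin n) k) : Matrix (Fin n) (Fin n) k).map e,
        (((γ : GL (Fin n) k)⁻¹ : GL (Fin n) k) : Matrix (Fin n) (Fin n) k).map e,
        hval_inv γ, hinv_val γ⟩
      map_one' := by
        apply Units.ext
        simpa using hmat_one
      map_mul' := by
        intro γ δ
        apply Units.ext
        obtain ⟨hγ1, _⟩ := hΓΔ γ.2
        obtain ⟨hδ1, _⟩ := hΓΔ δ.2
        show (((γ : GL (Fin n) k) * (δ : GL (Fin n) k) : GL (Fin n) k)
          : Matrix (Fin n) (Fin n) k).map e = _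
        rw [Units.val_mul, hmat_mul _ _ hγ1 hδ1]
        rfl } with hf
  haveI : Finite (GL (Fin n) F) := inferInstance
  refine ⟨f.ker.map Γ.subtype, Subgroup.map_subtype_le _, ?_, ?_⟩
  · show ((f.ker.map Γ.subtype).subgroupOf Γ).index ≠ 0
    have h4 : (f.ker.map Γ.subtype).subgroupOf Γ = f.ker :=
      Subgroup.comap_map_eq_self_of_injective Γ.subtype_injective f.ker
    rw [h4, Subgroup.index_ker]
    have : Nonempty f.range := ⟨1⟩
    exact Nat.card_ne_zero.mpr ⟨this, Subtype.finite⟩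
  · rw [Set.eq_empty_iff_forall_notMem]
    rintro γ ⟨hγH, hγC⟩
    obtain ⟨δ, hδker, hδγ⟩ := Subgroup.mem_map.mp hγH
    have hδ1 : ((δ : GL (Fin n) k) : Matrix (Fin n) (Fin n) k).map e = 1 := by
      have := congrArg Units.val ((MonoidHom.mem_ker).mp hδker)
      exact this
    obtain ⟨hmem, _⟩ := hΓΔ δ.2
    set vγ : Fin n × Fin n → A := fun ij =>
      ⟨((δ : GL (Fin n) k) : Matrix (Fin n) (Fin n) k) ij.1 ij.2, hmem ij.1 ij.2⟩ with hvγ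
    -- eval of q at vγ is zero
    have h1 : (algebraMap A k) (MvPolynomial.eval vγ q) = 0 := by
      have hfun1 : (fun ij : Fin n × Fin n => (algebraMap A k) (vγ ij))
          = fun ij => (γ : Matrix (Fin n) (Fin n) k) ij.1 ij.2 := by
        funext ij
        show ((Γ.subtype δ : GL (Fin n) k) : Matrix (Fin n) (Fin n) k) ij.1 ij.2
          = (γ : Matrix (Fin n) (Fin n) k) ij.1 ij.2
        rw [hδγ]
      rw [auxStmt18_eval_map, hmapq, hfun1]
      exact hp0 γ hγC
    have h2 : MvPolynomial.eval vγ q = 0 := by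
      apply Subtype.coe_injective
      simpa using h1
    -- but φ of it equals φ t which is nonzero
    have h3 : φ (MvPolynomial.eval vγ q) = φ t := by
      have hfun2 : (fun ij : Fin n × Fin n => φ (vγ ij))
          = fun ij : Fin n × Fin n => φ (v1 ij) := by
        funext ij
        show φ (vγ ij) = φ (v1 ij)
        rw [← he_mem (hmem ij.1 ij.2), ← he_mem (hone_mem ij.1 ij.2)]
        have h6 : (((δ : GL (Fin n) k) : Matrix (Fin n) (Fin n) k).map e) ij.1 ij.2
            = (1 : Matrix (Fin n) (Fin n) F) ij.1 ij.2 := by rw [hδ1]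
        rw [Matrix.map_apply] at h6
        rw [h6]
        by_cases h : ij.1 = ij.2 <;>
          simp [Matrix.one_apply, h, he_zero, he_one]
      show φ (MvPolynomial.eval vγ q) = φ (MvPolynomial.eval v1 q)
      rw [auxStmt18_eval_map, auxStmt18_eval_map, hfun2]
    rw [h2, map_zero] at h3
    exact hφt h3.symm
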